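/- Let X be a finite set of size n and let w : X → ℝ be a weight function with 0 ≤ w(x) ≤ M for all x ∈ X. Then for every m ≤ n there is a partition of X into parts X₁, …, X_m such that |X_i| ≤ ⌈2n/m⌉ and the total weight w(X_i) := Σ_{x∈X_i} w(x) satisfies w(X_i) ≤ 2·w(X)/m + M for all i ∈ [m]. -/

import Mathlib

/-- Proposition 2.10: partitioning a weighted finite set into `m` parts with balanced
sizes and balanced total weights. -/
theorem stmt_0 (α : Type*) [DecidableEq α] (X : Finset α) (n m : ℕ) (M : ℝ)
    (w : α → ℝ) (hn : X.card = n) (hM : 0 ≤ M)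
    (hw : ∀ x ∈ X, 0 ≤ w x ∧ w x ≤ M) (hm : 1 ≤ m) (hmn : m ≤ n) :
    ∃ P : Fin m → Finset α,
      (∀ i j, i ≠ j → Disjoint (P i) (P j)) ∧
      (Finset.univ.biUnion P = X) ∧
      (∀ i, (P i).card ≤ ⌈(2 * (n : ℝ)) / (m : ℝ)⌉₊ ∧
        ∑ x ∈ P i, w x ≤ 2 * (∑ x ∈ X, w x) / (m : ℝ) + M) := by
  classical
  have hm0 : 0 < m := hm
  have hn0 : 0 < n := lt_of_lt_of_le hm0 hmn
  have hmr : (0:ℝ) < m := by exact_mod_cast hm0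
  set l : List α := X.toList.mergeSort (fun a b => decide (w b ≤ w a)) with hl
  have hperm : l.Perm X.toList := List.mergeSort_perm _ _
  have hnd : l.Nodup := hperm.nodup_iff.mpr X.nodup_toList
  have hlen : l.length = n := by rw [hperm.length_eq, Finset.length_toList, hn]
  have hsorted : l.Pairwise (fun a b => w b ≤ w a) := by
    have := List.pairwise_mergeSort (le := fun a b => decide (w b ≤ w a))
      (fun a b c h1 h2 => by simp at h1 h2 ⊢; linarith)
      (fun a b => by simp [le_total]) X.toList
    exact this.imp (fun h => by simpa using h)
  have hmem : ∀ x, x ∈ l ↔ x ∈ X := by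
    intro x; rw [hperm.mem_iff, Finset.mem_toList]
  set e : Fin n → α := fun j => l.get (Fin.cast hlen.symm j) with he
  have he_inj : Function.Injective e := by
    intro a b hab
    have h := List.nodup_iff_injective_get.mp hnd hab
    exact Fin.ext (by simpa using congrArg Fin.val h)
  have heX : ∀ j, e j ∈ X := fun j => (hmem _).mp (l.get_mem _)
  have himg : Finset.image e Finset.univ = X := by
    apply Finset.eq_of_subset_of_card_le
    · intro x hx
      simp only [Finset.mem_image, Finset.mem_univ, true_and] at hx
      obtain ⟨j, rfl⟩ := hx; exact heX j
    · rw [hn, Finset.card_image_of_injective _ he_inj, Finset.card_univ, Fintype.card_fin]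
  set g : ℕ → ℝ := fun j => if h : j < n then w (e ⟨j, h⟩) else 0 with hg
  have hg0 : ∀ j, 0 ≤ g j := by
    intro j
    by_cases h : j < n
    · simp only [hg, dif_pos h]; exact (hw _ (heX _)).1
    · simp [hg, h]
  have hgM : ∀ j, g j ≤ M := by
    intro j
    by_cases h : j < n
    · simp only [hg, dif_pos h]; exact (hw _ (heX _)).2
    · simp [hg, h, hM]
  have hmono : ∀ a b : ℕ, a ≤ b → g b ≤ g a := by
    intro a b hab
    by_cases hb : b < n
    · have ha : a < n := lt_of_le_of_lt hab hb
      simp only [hg, dif_pos hb, dif_pos ha]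
      rcases eq_or_lt_of_le hab with rfl | hlt
      · exact le_refl _
      · exact hsorted.rel_get_of_lt hlt
    · simp only [hg, dif_neg hb]; exact hg0 a
  have hsep : ∀ a b : ℕ, a % m = b % m → a < b → a + m ≤ b := by
    intro a b hab hlt
    have hd : m ∣ b - a := (Nat.modEq_iff_dvd' hlt.le).mp hab
    have := Nat.le_of_dvd (by omega) hd
    omega
  set W := ∑ x ∈ X, w x with hW
  have hW0 : 0 ≤ W := Finset.sum_nonneg (fun x hx => (hw x hx).1)
  have hWsum : ∑ j ∈ Finset.range n, g j = W := by
    rw [hW, ← himg, Finset.sum_image (fun a _ b _ h => he_inj h), Finset.sum_range]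
    apply Finset.sum_congr rfl
    intro j _
    simp [hg, j.isLt]
  set P : Fin m → Finset α := fun i =>
    ((Finset.univ : Finset (Fin n)).filter (fun j : Fin n => (j : ℕ) % m = (i : ℕ))).image e with hP
  refine ⟨P, ?_, ?_, ?_⟩
  · intro i j hij
    rw [Finset.disjoint_left]
    rintro x hx hy
    simp only [hP, Finset.mem_image, Finset.mem_filter, Finset.mem_univ, true_and] at hx hy
    obtain ⟨a, ha, rfl⟩ := hx
    obtain ⟨b, hb, hba⟩ := hy
    cases he_inj hba
    exact hij (Fin.ext (ha.symm.trans hb))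
  · ext x
    simp only [Finset.mem_biUnion, Finset.mem_univ, true_and]
    constructor
    · rintro ⟨i, hx⟩
      simp only [hP, Finset.mem_image, Finset.mem_filter, Finset.mem_univ, true_and] at hx
      obtain ⟨a, _, rfl⟩ := hx; exact heX a
    · intro hx
      have hx' : x ∈ Finset.image e Finset.univ := himg ▸ hx
      simp only [Finset.mem_image, Finset.mem_univ, true_and] at hx'
      obtain ⟨a, rfl⟩ := hx'
      refine ⟨⟨(a : ℕ) % m, Nat.mod_lt _ hm0⟩, ?_⟩
      simp only [hP, Finset.mem_image, Finset.mem_filter, Finset.mem_univ, true_and]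
      exact ⟨a, rfl, rfl⟩
  · intro i
    constructor
    · have h1 : (P i).card ≤
          ((Finset.univ : Finset (Fin n)).filter (fun j : Fin n => (j : ℕ) % m = (i : ℕ))).card :=
        Finset.card_image_le
      have h2 : ((Finset.univ : Finset (Fin n)).filter
          (fun j : Fin n => (j : ℕ) % m = (i : ℕ))).card ≤ n / m + 1 := by
        have := Finset.card_le_card_of_injOn (f := fun j : Fin n => (j : ℕ) / m)
          (s := (Finset.univ : Finset (Fin n)).filter (fun j : Fin n => (j : ℕ) % m = (i : ℕ)))
          (t := Finset.range (n / m + 1)) ?_ ?_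
        · simpa using this
        · intro a _
          simp only [Finset.mem_range]
          have : (a : ℕ) / m ≤ n / m := Nat.div_le_div_right a.isLt.le
          simpa [Nat.lt_succ_iff] using this
        · intro a ha b hb hab
          simp only [Finset.coe_filter, Set.mem_setOf_eq, Finset.mem_univ, true_and] at ha hb
          have hab' : (a : ℕ) / m = (b : ℕ) / m := hab
          have hv : (a : ℕ) = (b : ℕ) := by
            conv_lhs => rw [← Nat.div_add_mod (a : ℕ) m]
            conv_rhs => rw [← Nat.div_add_mod (b : ℕ) m]
            rw [hab', ha, hb]
          exact Fin.ext hv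
      have h3 : ((n / m + 1 : ℕ) : ℝ) ≤ 2 * n / m := by
        have hdiv : ((n / m : ℕ) : ℝ) ≤ (n : ℝ) / m := Nat.cast_div_le
        have h1n : (1:ℝ) ≤ (n:ℝ)/m := by
          rw [le_div_iff₀ hmr]
          simpa using (Nat.cast_le (α := ℝ)).mpr hmn
        have : 2 * (n:ℝ) / m = (n:ℝ)/m + (n:ℝ)/m := by ring
        push_cast
        linarith
      have h4 : ((P i).card : ℝ) ≤ (⌈(2 * (n : ℝ)) / (m : ℝ)⌉₊ : ℝ) :=
        le_trans (le_trans (by exact_mod_cast le_trans h1 h2) h3) (Nat.le_ceil _)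
      exact_mod_cast h4
    · set F := (Finset.range n).filter (fun j => j % m = (i : ℕ)) with hF
      have hsum : ∑ x ∈ P i, w x = ∑ j ∈ F, g j := by
        rw [hP]
        rw [Finset.sum_image (fun a _ b _ h => he_inj h), hF, Finset.sum_filter,
          Finset.sum_filter, Finset.sum_range]
        apply Finset.sum_congr rfl
        intro j _
        have hgj : g (j : ℕ) = w (e j) := by simp [hg, j.isLt]
        rw [hgj]
      set F' := F.filter (fun j => m ≤ j) with hF'
      have hdisj : (↑F' : Set ℕ).PairwiseDisjoint (fun j => Finset.Ico (j - m) j) := by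
        intro a ha b hb hab
        simp only [hF', hF, Finset.coe_filter, Set.mem_setOf_eq, Finset.mem_filter,
          Finset.mem_range] at ha hb
        simp only [Function.onFun]
        rw [Finset.disjoint_left]
        intro x hx hx'
        rw [Finset.mem_Ico] at hx hx'
        rcases hab.lt_or_gt with h | h
        · have := hsep a b (by omega) h; omega
        · have := hsep b a (by omega) h; omega
      have key : ∑ j ∈ F', (m : ℝ) * g j ≤ ∑ t ∈ Finset.range n, g t := by
        calc ∑ j ∈ F', (m : ℝ) * g j
            ≤ ∑ j ∈ F', ∑ t ∈ Finset.Ico (j - m) j, g t := by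
              apply Finset.sum_le_sum
              intro j hj
              simp only [hF', hF, Finset.mem_filter, Finset.mem_range] at hj
              have hcard : (Finset.Ico (j - m) j).card = m := by
                rw [Nat.card_Ico]; omega
              calc (m : ℝ) * g j = ∑ _t ∈ Finset.Ico (j - m) j, g j := by
                    rw [Finset.sum_const, hcard, nsmul_eq_mul]
                _ ≤ ∑ t ∈ Finset.Ico (j - m) j, g t := by
                    apply Finset.sum_le_sum
                    intro t ht
                    exact hmono t j (Finset.mem_Ico.mp ht).2.le
          _ = ∑ t ∈ F'.biUnion (fun j => Finset.Ico (j - m) j), g t :=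
              (Finset.sum_biUnion hdisj).symm
          _ ≤ ∑ t ∈ Finset.range n, g t := by
              apply Finset.sum_le_sum_of_subset_of_nonneg
              · intro t ht
                simp only [Finset.mem_biUnion] at ht
                obtain ⟨j, hj, ht⟩ := ht
                simp only [hF', hF, Finset.mem_filter, Finset.mem_range] at hj
                rw [Finset.mem_Ico] at ht
                rw [Finset.mem_range]
                omega
              · intro t _ _; exact hg0 t
      have key2 : ∑ j ∈ F', g j ≤ W / m := by
        rw [le_div_iff₀ hmr]
        calc (∑ j ∈ F', g j) * m = ∑ j ∈ F', (m : ℝ) * g j := by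
              rw [Finset.sum_mul]; apply Finset.sum_congr rfl; intro j _; ring
          _ ≤ ∑ t ∈ Finset.range n, g t := key
          _ = W := hWsum
      have key3 : ∑ j ∈ F.filter (fun j => ¬ m ≤ j), g j ≤ M := by
        have hsub : F.filter (fun j => ¬ m ≤ j) ⊆ {(i : ℕ)} := by
          intro j hj
          simp only [hF, Finset.mem_filter, Finset.mem_range, not_le] at hj
          have : j % m = j := Nat.mod_eq_of_lt hj.2
          simp only [Finset.mem_singleton]
          omega
        calc ∑ j ∈ F.filter (fun j => ¬ m ≤ j), g j
            ≤ ∑ j ∈ ({(i : ℕ)} : Finset ℕ), g j :=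
              Finset.sum_le_sum_of_subset_of_nonneg hsub (fun t _ _ => hg0 t)
          _ = g (i : ℕ) := Finset.sum_singleton _ _
          _ ≤ M := hgM _
      have hsplit := Finset.sum_filter_add_sum_filter_not F (fun j => m ≤ j) g
      have hWm : 0 ≤ W / m := div_nonneg hW0 hmr.le
      have h2Wm : 2 * W / m = W / m + W / m := by ring
      rw [hsum]
      rw [hF'] at key2
      linarith
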